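/- Let p be an odd prime and n ≥ 2 an integer. For every integer a with gcd(a, p) = 1 and every integer b with p | b, one has Kl(a, b; p^n) = 0. -/

import Mathlib

/-- `e_q(t) = exp(2πi t / q)`. -/
noncomputable def eI (q : ℕ) (t : ℤ) : ℂ :=
  Complex.exp (2 * Real.pi * Complex.I * (t : ℂ) / (q : ℂ))

/-- The Kloosterman sum `Kl(a,b;q) = ∑_{x mod q, (x,q)=1} e_q(a x̄ + b x)`. -/
noncomputable def Kl (a b : ℤ) (q : ℕ) : ℂ :=
  ∑ x ∈ Finset.range q, if Nat.gcd x q = 1 then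
    eI q (a * (((x : ZMod q)⁻¹).val : ℤ) + b * (x : ℤ)) else 0

lemma eI_add (q : ℕ) (j k : ℤ) : eI q (j + k) = eI q j * eI q k := by
  rw [eI, eI, eI, ← Complex.exp_add]
  congr 1
  push_cast
  ring

lemma eI_nat_mul (q : ℕ) (hq : q ≠ 0) (s : ℤ) : eI q (q * s) = 1 := by
  have h : (2 * (Real.pi:ℂ) * Complex.I * (((q:ℤ) * s : ℤ) : ℂ) / (q : ℂ))
      = s * (2 * Real.pi * Complex.I) := by
    have : (q:ℂ) ≠ 0 := Nat.cast_ne_zero.mpr hq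
    field_simp
    push_cast
    ring
  rw [eI, h, Complex.exp_int_mul_two_pi_mul_I]

lemma eI_congr (q : ℕ) (hq : q ≠ 0) {j k : ℤ} (h : (q:ℤ) ∣ j - k) : eI q j = eI q k := by
  obtain ⟨s, hs⟩ := h
  have hj : j = k + q * s := by linarith
  rw [hj, eI_add, eI_nat_mul q hq, mul_one]

lemma eI_pow (q : ℕ) (c : ℤ) (z : ℕ) : eI q (c * z) = (eI q c) ^ z := by
  rw [eI, eI, ← Complex.exp_nat_mul]
  congr 1
  push_cast
  ring

lemma sum_eI_eq_zero (p : ℕ) (hp : p.Prime) (c : ℤ) (hc : ¬ (p:ℤ) ∣ c) :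
    ∑ z ∈ Finset.range p, eI p (c * z) = 0 := by
  have hp0 : (p:ℂ) ≠ 0 := Nat.cast_ne_zero.mpr hp.pos.ne'
  have hne : eI p c ≠ 1 := by
    intro h
    rw [eI, Complex.exp_eq_one_iff] at h
    obtain ⟨k, hk⟩ := h
    apply hc
    have h2 : (2:ℂ) * Real.pi * Complex.I ≠ 0 := by
      simp [Real.pi_ne_zero, Complex.I_ne_zero]
    have hc2 : (c : ℂ) = k * p := by
      field_simp at hk
      linear_combination hk
    have : c = k * p := by exact_mod_cast hc2
    exact ⟨k, by linarith⟩
  have hpow : (eI p c) ^ p = 1 := by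
    rw [← eI_pow, mul_comm]
    exact eI_nat_mul p hp.pos.ne' c
  calc ∑ z ∈ Finset.range p, eI p (c * z) = ∑ z ∈ Finset.range p, (eI p c) ^ z :=
        Finset.sum_congr rfl fun z _ => eI_pow p c z
    _ = ((eI p c) ^ p - 1) / (eI p c - 1) := geom_sum_eq hne p
    _ = 0 := by rw [hpow, sub_self, zero_div]

lemma sum_range_mul {M : Type*} [AddCommMonoid M] (m p : ℕ) (hm : 0 < m) (f : ℕ → M) :
    ∑ x ∈ Finset.range (m * p), f x
      = ∑ y ∈ Finset.range m, ∑ z ∈ Finset.range p, f (y + m * z) := by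
  rw [← Finset.sum_product']
  apply Finset.sum_nbij' (fun x => (x % m, x / m)) (fun yz => yz.1 + m * yz.2)
  · intro x hx
    simp only [Finset.mem_range] at hx
    simp only [Finset.mem_product, Finset.mem_range]
    exact ⟨Nat.mod_lt _ hm, Nat.div_lt_of_lt_mul (by omega)⟩
  · intro yz hyz
    simp only [Finset.mem_product, Finset.mem_range] at hyz
    simp only [Finset.mem_range]
    calc yz.1 + m * yz.2 < m + m * yz.2 := by omega
      _ ≤ m * p := by nlinarith [hyz.1, hyz.2]
  · intro x hx
    exact Nat.mod_add_div x m
  · intro yz hyz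
    simp only [Finset.mem_product, Finset.mem_range] at hyz
    have h1 : (yz.1 + m * yz.2) % m = yz.1 := by
      rw [Nat.add_mul_mod_self_left, Nat.mod_eq_of_lt hyz.1]
    have h2 : (yz.1 + m * yz.2) / m = yz.2 := by
      rw [Nat.add_mul_div_left _ _ hm, Nat.div_eq_of_lt hyz.1, zero_add]
    exact Prod.ext h1 h2
  · intro x hx
    rw [Nat.mod_add_div x m]

lemma eI_shrink (p : ℕ) (hp : p ≠ 0) (n : ℕ) (hn : 1 ≤ n) (w : ℤ) :
    eI (p^n) ((p:ℤ)^(n-1) * w) = eI p w := by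
  rw [eI, eI]
  congr 1
  have h1 : (p:ℂ) ≠ 0 := Nat.cast_ne_zero.mpr hp
  have h3 : (p:ℂ)^(n-1) ≠ 0 := pow_ne_zero _ h1
  have h2 : ((p^n : ℕ):ℂ) = (p:ℂ)^(n-1) * p := by
    push_cast
    rw [← pow_succ]
    congr 1
    omega
  rw [h2]
  push_cast
  field_simp

theorem stmt4 (p : ℕ) (hp : p.Prime) (hodd : p ≠ 2) (n : ℕ) (hn : 2 ≤ n)
    (a : ℤ) (ha : Int.gcd a p = 1) (b : ℤ) (hb : (p : ℤ) ∣ b) :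
    Kl a b (p ^ n) = 0 := by
  have hp0 : p ≠ 0 := hp.pos.ne'
  haveI : NeZero (p ^ n) := ⟨pow_ne_zero _ hp0⟩
  have hq0 : p ^ n ≠ 0 := pow_ne_zero _ hp0
  have hqm : p ^ n = p ^ (n-1) * p := by rw [← pow_succ]; congr 1; omega
  have hm0 : 0 < p ^ (n-1) := pow_pos hp.pos _
  have hpm : p ∣ p ^ (n-1) := dvd_pow_self p (by omega : n - 1 ≠ 0)
  have hpInt : Prime (p:ℤ) := Nat.prime_iff_prime_int.mp hp
  have hpa : ¬ (p:ℤ) ∣ a := by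
    intro hd
    have hcop : IsCoprime a (p:ℤ) := Int.isCoprime_iff_gcd_eq_one.mpr ha
    have hu : IsUnit ((p:ℤ)) := hcop.isUnit_of_dvd' hd dvd_rfl
    rw [Int.isUnit_iff] at hu
    have := hp.two_le
    omega
  have hq_dvd_mm : p ^ n ∣ p ^ (n-1) * p ^ (n-1) := by
    rw [← pow_add]; exact pow_dvd_pow p (by omega)
  obtain ⟨b', hb'⟩ := hb
  have hq_dvd_bm : ((p^n : ℕ):ℤ) ∣ b * (p^(n-1) : ℕ) := by
    refine ⟨b', ?_⟩
    rw [hb']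
    push_cast
    rw [show ((p:ℤ))^n = (p:ℤ)^(n-1) * p by rw [← pow_succ]; congr 1; omega]
    ring
  -- coprimality criterion
  have h1 : ∀ x : ℕ, (Nat.gcd x (p^n) = 1 ↔ ¬ p ∣ x) := by
    intro x
    have : Nat.Coprime x (p^n) ↔ ¬ p ∣ x := by
      rw [Nat.coprime_pow_right_iff (by omega : 0 < n), Nat.coprime_comm,
        hp.coprime_iff_not_dvd]
    exact this
  have hcond : ∀ y z : ℕ, (Nat.gcd (y + p^(n-1) * z) (p^n) = 1 ↔ Nat.gcd y (p^n) = 1) := by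
    intro y z
    rw [h1, h1]
    have hdz : p ∣ p^(n-1) * z := hpm.mul_right z
    constructor
    · intro h hpy
      exact h (Nat.dvd_add hpy hdz)
    · intro h hx
      exact h ((Nat.dvd_add_right hdz).mp (by rwa [add_comm] at hx))
  rw [Kl]
  rw [show Finset.range (p^n) = Finset.range (p^(n-1) * p) by rw [← hqm]]
  rw [sum_range_mul _ _ hm0]
  apply Finset.sum_eq_zero
  intro y hy
  by_cases hgy : Nat.gcd y (p^n) = 1
  · -- main case
    set Y : ZMod (p^n) := (y : ZMod (p^n)) with hYdef
    have hYinv : Y * Y⁻¹ = 1 := ZMod.coe_mul_inv_eq_one y hgy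
    have hYunit : IsUnit Y := IsUnit.of_mul_eq_one _ hYinv
    have hvY : (((Y⁻¹).val : ℕ) : ZMod (p^n)) = Y⁻¹ := ZMod.natCast_rightInverse _
    have hYinvUnit : IsUnit (Y⁻¹) := IsUnit.of_mul_eq_one _ (ZMod.inv_mul_of_unit Y hYunit)
    have hvcop : Nat.Coprime (Y⁻¹).val (p^n) :=
      (ZMod.isUnit_iff_coprime _ _).mp (by rw [hvY]; exact hYinvUnit)
    have hpv : ¬ (p:ℤ) ∣ ((Y⁻¹).val : ℤ) := by
      have hnd : ¬ p ∣ (Y⁻¹).val := (h1 _).mp hvcop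
      exact_mod_cast hnd
    have hpd : ¬ (p:ℤ) ∣ (-a * ((Y⁻¹).val : ℤ)^2) := by
      intro hd
      rcases hpInt.dvd_mul.mp hd with h | h
      · exact hpa ((dvd_neg).mp h)
      · exact hpv (hpInt.dvd_of_dvd_pow h)
    have hM2 : ((p : ZMod (p^n)))^(n-1) * ((p : ZMod (p^n)))^(n-1) = 0 := by
      have h0 : (((p^(n-1) * p^(n-1) : ℕ)) : ZMod (p^n)) = 0 :=
        (ZMod.natCast_eq_zero_iff _ _).mpr hq_dvd_mm
      push_cast at h0
      exact h0
    have hbM : (b : ZMod (p^n)) * ((p : ZMod (p^n)))^(n-1) = 0 := by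
      have h0 : ((b * ((p^(n-1):ℕ):ℤ) : ℤ) : ZMod (p^n)) = 0 :=
        (ZMod.intCast_zmod_eq_zero_iff_dvd _ _).mpr hq_dvd_bm
      push_cast at h0
      exact h0
    -- per-term computation
    have hterm : ∀ z ∈ Finset.range p,
        (if Nat.gcd (y + p^(n-1) * z) (p^n) = 1 then
          eI (p^n) (a * ((((y + p^(n-1) * z : ℕ) : ZMod (p^n))⁻¹).val : ℤ)
            + b * ((y + p^(n-1) * z : ℕ) : ℤ)) else 0)
        = eI (p^n) (a * ((Y⁻¹).val : ℤ) + b * (y:ℤ))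
            * eI p ((-a * ((Y⁻¹).val : ℤ)^2) * z) := by
      intro z hz
      rw [if_pos ((hcond y z).mpr hgy)]
      have hXY : (((y + p^(n-1) * z : ℕ) : ZMod (p^n)))
          = Y + ((p : ZMod (p^n)))^(n-1) * (z : ZMod (p^n)) := by
        push_cast
        ring
      set M : ZMod (p^n) := ((p : ZMod (p^n)))^(n-1) with hMdef
      set Z : ZMod (p^n) := ((z:ℕ) : ZMod (p^n)) with hZdef
      have hprod : (Y + M * Z) * (Y⁻¹ - Y⁻¹^2 * M * Z) = 1 := by
        linear_combination (1 - Y⁻¹ * M * Z) * hYinv - Y⁻¹^2 * Z^2 * hM2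
      have hXu : IsUnit (Y + M * Z) := IsUnit.of_mul_eq_one _ hprod
      have hXinv : (Y + M * Z)⁻¹ = Y⁻¹ - Y⁻¹^2 * M * Z := by
        calc (Y + M * Z)⁻¹ = (Y + M * Z)⁻¹ * ((Y + M * Z) * (Y⁻¹ - Y⁻¹^2 * M * Z)) := by
              rw [hprod, mul_one]
          _ = ((Y + M * Z)⁻¹ * (Y + M * Z)) * (Y⁻¹ - Y⁻¹^2 * M * Z) := by ring
          _ = Y⁻¹ - Y⁻¹^2 * M * Z := by rw [ZMod.inv_mul_of_unit _ hXu, one_mul]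
      have hvX2 : (((((y + p^(n-1) * z : ℕ) : ZMod (p^n))⁻¹).val : ℕ) : ZMod (p^n))
          = Y⁻¹ - Y⁻¹^2 * M * Z := by
        rw [ZMod.natCast_rightInverse _, hXY, hXinv]
      push_cast at hvX2
      have hkey : ((a * ((((y + p^(n-1) * z : ℕ) : ZMod (p^n))⁻¹).val : ℤ)
            + b * ((y + p^(n-1) * z : ℕ) : ℤ) : ℤ) : ZMod (p^n))
          = (((a * ((Y⁻¹).val : ℤ) + b * (y:ℤ))
              + ((-a * ((Y⁻¹).val : ℤ)^2) * ((p^(n-1):ℕ):ℤ)) * (z:ℤ) : ℤ)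
            : ZMod (p^n)) := by
        push_cast
        rw [hvX2, hvY]
        linear_combination ((z : ZMod (p^n))) * hbM
      have hdvd : ((p^n : ℕ):ℤ) ∣ (a * ((((y + p^(n-1) * z : ℕ) : ZMod (p^n))⁻¹).val : ℤ)
            + b * ((y + p^(n-1) * z : ℕ) : ℤ))
          - ((a * ((Y⁻¹).val : ℤ) + b * (y:ℤ))
              + ((-a * ((Y⁻¹).val : ℤ)^2) * ((p^(n-1):ℕ):ℤ)) * (z:ℤ)) :=
        Int.ModEq.dvd ((ZMod.intCast_eq_intCast_iff _ _ _).mp hkey).symm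
      rw [eI_congr _ hq0 (by push_cast at hdvd ⊢; exact hdvd)]
      rw [eI_add]
      congr 1
      rw [show -a * ((Y⁻¹).val : ℤ)^2 * (p:ℤ)^(n-1) * (z:ℤ)
          = (p:ℤ)^(n-1) * (-a * ((Y⁻¹).val : ℤ)^2 * z) by ring]
      exact eI_shrink p hp0 n (by omega) _
    rw [Finset.sum_congr rfl hterm, ← Finset.mul_sum,
      sum_eI_eq_zero p hp _ hpd, mul_zero]
  · apply Finset.sum_eq_zero
    intro z hz
    rw [if_neg]
    intro h
    exact hgy ((hcond y z).mp h)
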